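/- Assume K = [a,b] is a nondegenerate interval and Ũ is the subshift of finite type determined by the allowed word set W ⊆ {1,…,m}^L. Then for any two distinct words u, v ∈ {1,…,m}^{L−1}, the convex hulls J_u and J_v are disjoint: J_u ∩ J_v = ∅. -/

import Mathlib

open Filter Topology Set

/-- `ifsIter m f i n = f_{i₁} ∘ ⋯ ∘ f_{iₙ} (0)`. -/
noncomputable def ifsIter (m : ℕ) (f : Fin m → ℝ → ℝ) : (ℕ → Fin m) → ℕ → ℝ
  | _, 0 => 0
  | i, n + 1 => f (i 0) (ifsIter m f (fun k => i (k + 1)) n)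

/-- iteration started from `y` instead of `0`. -/
noncomputable def ifsIterFrom (m : ℕ) (f : Fin m → ℝ → ℝ) (y : ℝ) : (ℕ → Fin m) → ℕ → ℝ
  | _, 0 => y
  | i, n + 1 => f (i 0) (ifsIterFrom m f y (fun k => i (k + 1)) n)

def consSeq (m : ℕ) (j : Fin m) (e : ℕ → Fin m) : ℕ → Fin m :=
  fun k => match k with | 0 => j | k + 1 => e k

lemma ifsIter_cons (m : ℕ) (f : Fin m → ℝ → ℝ) (j : Fin m) (e : ℕ → Fin m) (n : ℕ) :
    ifsIter m f (consSeq m j e) (n + 1) = f j (ifsIter m f e n) := rfl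

lemma ifsIterFrom_mem (m : ℕ) (f : Fin m → ℝ → ℝ) (K : Set ℝ)
    (hfK : ∀ (j : Fin m) y, y ∈ K → f j y ∈ K) (y : ℝ) (hy : y ∈ K) :
    ∀ n i, ifsIterFrom m f y i n ∈ K := by
  intro n
  induction n with
  | zero => intro i; exact hy
  | succ n ih => intro i; exact hfK _ _ (ih _)

lemma ifsIter_dist (m : ℕ) (r : Fin m → ℝ) (a : Fin m → ℝ) (f : Fin m → ℝ → ℝ)
    (hr : ∀ j, 0 < r j ∧ r j < 1) (hf : ∀ j x, f j x = r j * x + a j)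
    (R : ℝ) (hR0 : 0 ≤ R) (hRr : ∀ j, r j ≤ R) (y : ℝ) :
    ∀ n i, |ifsIterFrom m f y i n - ifsIter m f i n| ≤ R ^ n * |y| := by
  intro n
  induction n with
  | zero => intro i; simp [ifsIterFrom, ifsIter]
  | succ n ih =>
    intro i
    have h1 : ifsIterFrom m f y i (n + 1) = f (i 0) (ifsIterFrom m f y (fun k => i (k+1)) n) := rfl
    have h2 : ifsIter m f i (n + 1) = f (i 0) (ifsIter m f (fun k => i (k+1)) n) := rfl
    rw [h1, h2, hf, hf]
    have := ih (fun k => i (k+1))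
    have hrj := hr (i 0)
    calc |r (i 0) * ifsIterFrom m f y (fun k => i (k+1)) n + a (i 0) -
          (r (i 0) * ifsIter m f (fun k => i (k+1)) n + a (i 0))|
        = r (i 0) * |ifsIterFrom m f y (fun k => i (k+1)) n - ifsIter m f (fun k => i (k+1)) n| := by
          rw [show r (i 0) * ifsIterFrom m f y (fun k => i (k+1)) n + a (i 0) -
            (r (i 0) * ifsIter m f (fun k => i (k+1)) n + a (i 0)) =
            r (i 0) * (ifsIterFrom m f y (fun k => i (k+1)) n - ifsIter m f (fun k => i (k+1)) n) from by ring,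
            abs_mul, abs_of_pos hrj.1]
      _ ≤ R * (R ^ n * |y|) := by
          apply mul_le_mul (hRr _) this (abs_nonneg _) hR0
      _ = R ^ (n + 1) * |y| := by ring

lemma chain_dist (m : ℕ) (r : Fin m → ℝ) (a : Fin m → ℝ) (f : Fin m → ℝ → ℝ)
    (hr : ∀ j, 0 < r j ∧ r j < 1) (hf : ∀ j x, f j x = r j * x + a j)
    (R : ℝ) (hR0 : 0 ≤ R) (hRr : ∀ j, r j ≤ R) (C : ℝ) :
    ∀ n (dig : ℕ → Fin m) (t : ℕ → ℝ), (∀ k, |t k| ≤ C) →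
      (∀ k, f (dig k) (t (k + 1)) = t k) →
      |t 0 - ifsIter m f dig n| ≤ R ^ n * C := by
  intro n
  induction n with
  | zero =>
    intro dig t htC hchain
    simpa [ifsIter] using htC 0
  | succ n ih =>
    intro dig t htC hchain
    have h2 : ifsIter m f dig (n + 1) = f (dig 0) (ifsIter m f (fun k => dig (k+1)) n) := rfl
    have h0 : t 0 = f (dig 0) (t 1) := (hchain 0).symm
    have hih := ih (fun k => dig (k+1)) (fun k => t (k+1)) (fun k => htC (k+1))
      (fun k => hchain (k+1))
    have hrj := hr (dig 0)
    rw [h2, h0, hf, hf]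
    calc |r (dig 0) * t 1 + a (dig 0) - (r (dig 0) * ifsIter m f (fun k => dig (k+1)) n + a (dig 0))|
        = r (dig 0) * |t 1 - ifsIter m f (fun k => dig (k+1)) n| := by
          rw [show r (dig 0) * t 1 + a (dig 0) - (r (dig 0) * ifsIter m f (fun k => dig (k+1)) n + a (dig 0)) =
            r (dig 0) * (t 1 - ifsIter m f (fun k => dig (k+1)) n) from by ring,
            abs_mul, abs_of_pos hrj.1]
      _ ≤ R * (R ^ n * C) := by
          apply mul_le_mul (hRr _) hih (abs_nonneg _) hR0
      _ = R ^ (n + 1) * C := by ring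

lemma mem_convexHull_real {s : Set ℝ} {z : ℝ} (hz : z ∈ convexHull ℝ s) :
    ∃ p ∈ s, ∃ q ∈ s, p ≤ z ∧ z ≤ q := by
  have hsub : convexHull ℝ s ⊆ {z | ∃ p ∈ s, ∃ q ∈ s, p ≤ z ∧ z ≤ q} := by
    apply convexHull_min
    · intro x hx; exact ⟨x, hx, x, hx, le_refl _, le_refl _⟩
    · rintro x ⟨p, hp, q, hq, hpx, hxq⟩ y ⟨p', hp', q', hq', hpy, hyq⟩ α β hα hβ hαβ
      refine ⟨min p p', ?_, max q q', ?_, ?_, ?_⟩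
      · rcases le_total p p' with h | h
        · rwa [min_eq_left h]
        · rwa [min_eq_right h]
      · rcases le_total q q' with h | h
        · rwa [max_eq_right h]
        · rwa [max_eq_left h]
      · have h1 : min p p' ≤ x := le_trans (min_le_left _ _) hpx
        have h2 : min p p' ≤ y := le_trans (min_le_right _ _) hpy
        calc min p p' = α * min p p' + β * min p p' := by rw [← add_mul, hαβ, one_mul]
          _ ≤ α * x + β * y := by gcongr
      · have h1 : x ≤ max q q' := le_trans hxq (le_max_left _ _)
        have h2 : y ≤ max q q' := le_trans hyq (le_max_right _ _)
        calc α * x + β * y ≤ α * max q q' + β * max q q' := by gcongr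
          _ = max q q' := by rw [← add_mul, hαβ, one_mul]
  exact hsub hz

/-- if the attractor `K` is a nondegenerate interval and `Ũ` is the
subshift of finite type determined by the allowed words `W` of length `L = ℓ+2`, then
the convex hulls `J_u` of the pieces `K_u` (over words `u` of length `L−1`) are
pairwise disjoint. -/
theorem stmt14 (m : ℕ) (hm : 2 ≤ m) (r a : Fin m → ℝ)
    (hr : ∀ j, 0 < r j ∧ r j < 1)
    (f : Fin m → ℝ → ℝ) (hf : ∀ j x, f j x = r j * x + a j)
    (A B : ℝ) (hAB : A < B)
    (K : Set ℝ) (hK : K = Icc A B) (hKattr : K = ⋃ j, f j '' K)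
    (proj : (ℕ → Fin m) → ℝ)
    (hproj : ∀ i : ℕ → Fin m, Tendsto (ifsIter m f i) atTop (𝓝 (proj i)))
    (U : Set ℝ)
    (hU : U = {x | x ∈ K ∧ ∃! i : ℕ → Fin m, Tendsto (ifsIter m f i) atTop (𝓝 x)})
    (Ut : Set (ℕ → Fin m)) (hUt : Ut = proj ⁻¹' U)
    (ℓ : ℕ) (W : Set (Fin (ℓ + 2) → Fin m))
    (hSFT : Ut = {x : ℕ → Fin m | ∀ k : ℕ, (fun j : Fin (ℓ + 2) => x (k + j)) ∈ W})
    (Ku : (Fin (ℓ + 1) → Fin m) → Set ℝ)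
    (hKu : ∀ u, Ku u = {y | ∃ d ∈ Ut, (∀ i : Fin (ℓ + 1), d i = u i) ∧ proj d = y}) :
    ∀ u v : Fin (ℓ + 1) → Fin m, u ≠ v →
      convexHull ℝ (Ku u) ∩ convexHull ℝ (Ku v) = ∅ := by
  have hmpos : 0 < m := by omega
  have j0 : Fin m := ⟨0, hmpos⟩
  haveI : Nonempty (Fin m) := ⟨j0⟩
  -- a uniform contraction ratio
  obtain ⟨R, hR1, hRr⟩ : ∃ R, R < 1 ∧ ∀ j, r j ≤ R := by
    refine ⟨Finset.univ.sup' Finset.univ_nonempty r, ?_, ?_⟩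
    · exact (Finset.sup'_lt_iff _).2 (fun j _ => (hr j).2)
    · exact fun j => Finset.le_sup' r (Finset.mem_univ j)
  have hR0 : 0 ≤ R := le_trans (hr j0).1.le (hRr j0)
  set C : ℝ := max |A| |B| with hC
  have hC0 : 0 ≤ C := le_trans (abs_nonneg A) (le_max_left _ _)
  have habsK : ∀ z ∈ K, |z| ≤ C := by
    intro z hz
    rw [hK] at hz
    refine abs_le.2 ⟨?_, ?_⟩
    · calc -C ≤ -|A| := neg_le_neg (le_max_left _ _)
        _ ≤ A := neg_abs_le A
        _ ≤ z := hz.1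
    · calc z ≤ B := hz.2
        _ ≤ |B| := le_abs_self B
        _ ≤ C := le_max_right _ _
  have hfK : ∀ (j : Fin m) y, y ∈ K → f j y ∈ K := by
    intro j y hy
    rw [hKattr]
    exact mem_iUnion.2 ⟨j, ⟨y, hy, rfl⟩⟩
  have hclosed : IsClosed K := hK ▸ isClosed_Icc
  have hAK : A ∈ K := hK ▸ left_mem_Icc.2 hAB.le
  have hRlim : Tendsto (fun n : ℕ => R ^ n) atTop (𝓝 0) :=
    tendsto_pow_atTop_nhds_zero_of_lt_one hR0 hR1
  -- (1) proj lands in K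
  have projK : ∀ i, proj i ∈ K := by
    intro i
    have hmem : ∀ n, ifsIterFrom m f A i n ∈ K := fun n => ifsIterFrom_mem m f K hfK A hAK n i
    have hdist : ∀ n, |ifsIterFrom m f A i n - ifsIter m f i n| ≤ R ^ n * |A| :=
      fun n => ifsIter_dist m r a f hr hf R hR0 hRr A n i
    have h0 : Tendsto (fun n : ℕ => R ^ n * |A|) atTop (𝓝 0) := by
      simpa using hRlim.mul_const |A|
    have hlim : Tendsto (fun n => ifsIterFrom m f A i n) atTop (𝓝 (proj i)) := by
      refine (hproj i).congr_dist ?_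
      refine squeeze_zero (fun n => dist_nonneg) (fun n => ?_) h0
      rw [Real.dist_eq, abs_sub_comm]
      exact hdist n
    exact hclosed.mem_of_tendsto hlim (Filter.Eventually.of_forall hmem)
  -- (2) every point of K has a coding
  have hsurj : ∀ y ∈ K, ∃ e, proj e = y := by
    intro y hy
    have hstep : ∀ z, z ∈ K → ∃ j w, w ∈ K ∧ f j w = z := by
      intro z hz
      rw [hKattr] at hz
      obtain ⟨j, hj⟩ := mem_iUnion.1 hz
      obtain ⟨w, hw, hfw⟩ := hj
      exact ⟨j, w, hw, hfw⟩
    choose J Wn hWnK hWneq using hstep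
    set T : ℕ → {z : ℝ // z ∈ K} :=
      fun n => Nat.rec ⟨y, hy⟩ (fun _ p => ⟨Wn p.1 p.2, hWnK p.1 p.2⟩) n with hT
    set dig : ℕ → Fin m := fun n => J (T n).1 (T n).2 with hdig
    have hchain : ∀ k, f (dig k) ((T (k+1)).1) = (T k).1 := fun k => hWneq _ _
    have hbd : ∀ k, |(T k).1| ≤ C := fun k => habsK _ (T k).2
    have hdist : ∀ n, |(T 0).1 - ifsIter m f dig n| ≤ R ^ n * C :=
      fun n => chain_dist m r a f hr hf R hR0 hRr C n dig (fun k => (T k).1) hbd hchain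
    have h0 : Tendsto (fun n : ℕ => R ^ n * C) atTop (𝓝 0) := by
      simpa using hRlim.mul_const C
    have hlim : Tendsto (ifsIter m f dig) atTop (𝓝 y) := by
      have hy0 : (T 0).1 = y := rfl
      refine (tendsto_const_nhds (x := y)).congr_dist ?_
      refine squeeze_zero (fun n => dist_nonneg) (fun n => ?_) h0
      rw [Real.dist_eq]
      rw [← hy0]
      exact hdist n
    exact ⟨dig, tendsto_nhds_unique (hproj dig) hlim⟩
  -- (3) cons formula
  have hcons : ∀ (j : Fin m) e, proj (consSeq m j e) = f j (proj e) := by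
    intro j e
    have hc : Continuous (f j) := by
      have hfj : f j = fun x => r j * x + a j := funext (hf j)
      rw [hfj]; continuity
    have h1 : Tendsto (fun n => ifsIter m f (consSeq m j e) (n+1)) atTop
        (𝓝 (proj (consSeq m j e))) := (hproj _).comp (tendsto_add_atTop_nat 1)
    have h2 : (fun n => ifsIter m f (consSeq m j e) (n+1)) = fun n => f j (ifsIter m f e n) :=
      funext (fun n => ifsIter_cons m f j e n)
    rw [h2] at h1
    have h3 : Tendsto (fun n => f j (ifsIter m f e n)) atTop (𝓝 (f j (proj e))) :=
      (hc.tendsto _).comp (hproj e)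
    exact tendsto_nhds_unique h1 h3
  have hd_decomp : ∀ d : ℕ → Fin m, d = consSeq m (d 0) (fun k => d (k+1)) := by
    intro d; funext k; cases k <;> rfl
  have hproj_decomp : ∀ d : ℕ → Fin m, proj d = f (d 0) (proj (fun k => d (k+1))) := by
    intro d
    conv_lhs => rw [hd_decomp d]
    rw [hcons]
  -- (4) monotonicity
  have hmono : ∀ (j : Fin m) x y, f j x ≤ f j y ↔ x ≤ y := by
    intro j x y
    rw [hf, hf]
    have := (hr j).1
    constructor <;> intro h <;> nlinarith
  -- (5) unique codings
  have hcodeU : ∀ d, proj d ∈ U → ∀ e, proj e = proj d → e = d := by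
    intro d hd e he
    rw [hU] at hd
    obtain ⟨-, i, hi, huniq⟩ := hd
    have h1 : e = i := huniq e (he ▸ hproj e)
    have h2 : d = i := huniq d (hproj d)
    rw [h1, h2]
  have hUmem : ∀ d : ℕ → Fin m, (∀ e, proj e = proj d → e = d) → proj d ∈ U := by
    intro d h2
    rw [hU]
    refine ⟨projK d, d, hproj d, fun e he => ?_⟩
    exact h2 e (tendsto_nhds_unique (hproj e) he)
  -- (6) shift invariance of univoque codings
  have hshiftU : ∀ d : ℕ → Fin m, proj d ∈ U → proj (fun k => d (k+1)) ∈ U := by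
    intro d hd
    apply hUmem
    intro e' he'
    have hpe : proj (consSeq m (d 0) e') = proj d := by
      rw [hcons, he', ← hproj_decomp]
    have hc := hcodeU d hd _ hpe
    funext k
    exact congrFun hc (k+1)
  -- (7) main induction
  have hmain : ∀ n (u dp dq d : ℕ → Fin m),
      (∀ k, k < n → dp k = u k) → (∀ k, k < n → dq k = u k) →
      proj d ∈ U → proj dp ≤ proj d → proj d ≤ proj dq → ∀ k, k < n → d k = u k := by
    intro n
    induction n with
    | zero => intro u dp dq d _ _ _ _ _ k hk; omega
    | succ n ih =>
      intro u dp dq d hp hq hdU hle1 hle2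
      have hdp0 : dp 0 = u 0 := hp 0 (by omega)
      have hdq0 : dq 0 = u 0 := hq 0 (by omega)
      have hrj := (hr (u 0)).1
      have hpd : proj dp = f (u 0) (proj (fun k => dp (k+1))) := by
        rw [hproj_decomp dp, hdp0]
      have hqd : proj dq = f (u 0) (proj (fun k => dq (k+1))) := by
        rw [hproj_decomp dq, hdq0]
      have hσpK : proj (fun k => dp (k+1)) ∈ Icc A B := hK ▸ projK _
      have hσqK : proj (fun k => dq (k+1)) ∈ Icc A B := hK ▸ projK _
      have hx1 : f (u 0) A ≤ proj d :=
        le_trans (le_trans ((hmono (u 0) _ _).2 hσpK.1) hpd.ge) hle1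
      have hx2 : proj d ≤ f (u 0) B :=
        le_trans hle2 (le_trans hqd.le ((hmono (u 0) _ _).2 hσqK.2))
      set y : ℝ := (proj d - a (u 0)) / r (u 0) with hy
      have hfy : f (u 0) y = proj d := by
        rw [hf, hy]; field_simp; ring
      have hyK : y ∈ K := by
        rw [hK]
        constructor
        · exact (hmono (u 0) A y).1 (by rw [hfy]; exact hx1)
        · exact (hmono (u 0) y B).1 (by rw [hfy]; exact hx2)
      obtain ⟨e, he⟩ := hsurj y hyK
      have hce : proj (consSeq m (u 0) e) = proj d := by rw [hcons, he, hfy]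
      have hde : consSeq m (u 0) e = d := hcodeU d hdU _ hce
      have hd0 : d 0 = u 0 := by rw [← hde]; rfl
      have hσU : proj (fun k => d (k+1)) ∈ U := hshiftU d hdU
      have hxd : proj d = f (u 0) (proj (fun k => d (k+1))) := by
        rw [hproj_decomp d, hd0]
      have hb1 : proj (fun k => dp (k+1)) ≤ proj (fun k => d (k+1)) :=
        (hmono (u 0) _ _).1 (by rw [← hpd, ← hxd]; exact hle1)
      have hb2 : proj (fun k => d (k+1)) ≤ proj (fun k => dq (k+1)) :=
        (hmono (u 0) _ _).1 (by rw [← hqd, ← hxd]; exact hle2)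
      have hrec := ih (fun k => u (k+1)) (fun k => dp (k+1)) (fun k => dq (k+1))
        (fun k => d (k+1)) (fun k hk => hp (k+1) (by omega)) (fun k hk => hq (k+1) (by omega))
        hσU hb1 hb2
      intro k hk
      cases k with
      | zero => exact hd0
      | succ k => exact hrec k (by omega)
  -- (8) key lemma: a word coding a univoque point sandwiched between points with prefix w₂
  have key : ∀ (w₁ w₂ : Fin (ℓ+1) → Fin m) (d d₁ d₂ : ℕ → Fin m),
      d ∈ Ut → (∀ i : Fin (ℓ+1), d i = w₁ i) →
      (∀ i : Fin (ℓ+1), d₁ i = w₂ i) → (∀ i : Fin (ℓ+1), d₂ i = w₂ i) →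
      proj d₁ ≤ proj d → proj d ≤ proj d₂ → w₁ = w₂ := by
    intro w₁ w₂ d d₁ d₂ hd hw₁ hw₂₁ hw₂₂ hle1 hle2
    have hdU : proj d ∈ U := by rw [hUt] at hd; exact hd
    set w₂N : ℕ → Fin m := fun k => if h : k < ℓ + 1 then w₂ ⟨k, h⟩ else w₂ 0 with hw₂N
    have hp1 : ∀ k, k < ℓ + 1 → d₁ k = w₂N k := by
      intro k hk
      rw [show w₂N k = w₂ ⟨k, hk⟩ from dif_pos hk]
      exact hw₂₁ ⟨k, hk⟩
    have hp2 : ∀ k, k < ℓ + 1 → d₂ k = w₂N k := by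
      intro k hk
      rw [show w₂N k = w₂ ⟨k, hk⟩ from dif_pos hk]
      exact hw₂₂ ⟨k, hk⟩
    have hres := hmain (ℓ+1) w₂N d₁ d₂ d hp1 hp2 hdU hle1 hle2
    funext i
    have h1 := hres i.val i.isLt
    rw [show w₂N i.val = w₂ ⟨i.val, i.isLt⟩ from dif_pos i.isLt] at h1
    rw [← hw₁ i]
    rw [show (⟨i.val, i.isLt⟩ : Fin (ℓ+1)) = i from Fin.eta i i.isLt] at h1
    exact h1
  -- (9) conclusion
  intro u v huv
  rw [Set.eq_empty_iff_forall_notMem]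
  rintro z ⟨hzu, hzv⟩
  obtain ⟨p, hp, q, hq, hpz, hzq⟩ := mem_convexHull_real hzu
  obtain ⟨p', hp', q', hq', hpz', hzq'⟩ := mem_convexHull_real hzv
  rw [hKu] at hp hq hp' hq'
  obtain ⟨dp, hdpU, hdpu, hdpe⟩ := hp
  obtain ⟨dq, hdqU, hdqu, hdqe⟩ := hq
  obtain ⟨dp', hdp'U, hdp'v, hdp'e⟩ := hp'
  obtain ⟨dq', hdq'U, hdq'v, hdq'e⟩ := hq'
  rcases le_total p p' with h | h
  · -- p ≤ p' ≤ z ≤ q : p' is sandwiched between u-prefixed points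
    have := key v u dp' dp dq hdp'U hdp'v hdpu hdqu
      (by rw [hdpe, hdp'e]; exact h)
      (by rw [hdp'e, hdqe]; exact le_trans hpz' hzq)
    exact huv this.symm
  · -- p' ≤ p ≤ z ≤ q' : p is sandwiched between v-prefixed points
    have := key u v dp dp' dq' hdpU hdpu hdp'v hdq'v
      (by rw [hdpe, hdp'e]; exact h)
      (by rw [hdpe, hdq'e]; exact le_trans hpz hzq')
    exact huv this
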